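/- Define functions F_k : ℝ → ℝ recursively by F₀(λ) = 2/(e^λ − e^{−λ}) and F_{k+1}(λ) = deriv (deriv F_k) λ − (2k+1)² · F_k(λ). Then for every natural number d and every real λ ≠ 0, F_d(λ) = 2^{2d+1} · (2d)! / (e^λ − e^{−λ})^{2d+1}. -/

import Mathlib

private lemma s_ne {l : ℝ} (hl : l ≠ 0) : Real.exp l - Real.exp (-l) ≠ 0 := by
  intro h
  apply hl
  have := Real.exp_eq_exp.mp (sub_eq_zero.mp h)
  linarith

private lemma hasDerivAt_s (l : ℝ) :
    HasDerivAt (fun x : ℝ => Real.exp x - Real.exp (-x))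
      (Real.exp l + Real.exp (-l)) l := by
  have h1 := Real.hasDerivAt_exp l
  have h2 : HasDerivAt (fun x : ℝ => Real.exp (-x)) (-Real.exp (-l)) l := by
    have h := (Real.hasDerivAt_exp (-l)).comp l (hasDerivAt_neg l); rw [mul_neg_one] at h; exact h
  have h := h1.sub h2; rw [sub_neg_eq_add] at h; exact h

private lemma d1 (c : ℝ) (n : ℕ) {x : ℝ} (hx : x ≠ 0) :
    HasDerivAt (fun y : ℝ => c / (Real.exp y - Real.exp (-y)) ^ (n + 1))
      (-c * (n + 1) * (Real.exp x + Real.exp (-x)) /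
        (Real.exp x - Real.exp (-x)) ^ (n + 2)) x := by
  have hs := s_ne hx
  have hpow : HasDerivAt (fun y : ℝ => (Real.exp y - Real.exp (-y)) ^ (n + 1))
      (((n:ℝ) + 1) * (Real.exp x - Real.exp (-x)) ^ n * (Real.exp x + Real.exp (-x))) x := by
    have : HasDerivAt (fun y : ℝ => (Real.exp y - Real.exp (-y)) ^ (n + 1)) _ x :=
      (hasDerivAt_s x).pow (n + 1)
    convert this using 1
    push_cast
    ring
  have : HasDerivAt (fun y : ℝ => c / (Real.exp y - Real.exp (-y)) ^ (n + 1)) _ x :=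
    (hasDerivAt_const x c).div hpow (pow_ne_zero _ hs)
  convert this using 1
  field_simp
  ring

private lemma d2 (c : ℝ) (n : ℕ) {l : ℝ} (hl : l ≠ 0) :
    deriv (deriv (fun y : ℝ => c / (Real.exp y - Real.exp (-y)) ^ (n + 1))) l
      = c * ((n : ℝ) + 1) ^ 2 / (Real.exp l - Real.exp (-l)) ^ (n + 1)
        + 4 * ((n : ℝ) + 1) * ((n : ℝ) + 2) * c / (Real.exp l - Real.exp (-l)) ^ (n + 3) := by
  have hop : {x : ℝ | x ≠ 0} ∈ nhds l := isOpen_ne.mem_nhds hl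
  have hde : deriv (fun y : ℝ => c / (Real.exp y - Real.exp (-y)) ^ (n + 1))
      =ᶠ[nhds l] fun x => -c * (n + 1) * (Real.exp x + Real.exp (-x)) /
        (Real.exp x - Real.exp (-x)) ^ (n + 2) := by
    filter_upwards [hop] with x hx
    exact (d1 c n hx).deriv
  rw [Filter.EventuallyEq.deriv_eq hde]
  have hs := s_ne hl
  have hu : HasDerivAt (fun x : ℝ => -c * ((n : ℝ) + 1) * (Real.exp x + Real.exp (-x)))
      (-c * ((n : ℝ) + 1) * (Real.exp l - Real.exp (-l))) l := by
    have h2 : HasDerivAt (fun x : ℝ => Real.exp (-x)) (-Real.exp (-l)) l := by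
      have h := (Real.hasDerivAt_exp (-l)).comp l (hasDerivAt_neg l); rw [mul_neg_one] at h; exact h
    have : HasDerivAt (fun x : ℝ => -c * ((n : ℝ) + 1) * (Real.exp x + Real.exp (-x))) _ l :=
      ((Real.hasDerivAt_exp l).add h2).const_mul (-c * ((n : ℝ) + 1))
    convert this using 1
    ring
  have hv : HasDerivAt (fun y : ℝ => (Real.exp y - Real.exp (-y)) ^ (n + 2))
      (((n : ℝ) + 2) * (Real.exp l - Real.exp (-l)) ^ (n + 1) * (Real.exp l + Real.exp (-l))) l := by
    have : HasDerivAt (fun y : ℝ => (Real.exp y - Real.exp (-y)) ^ (n + 2)) _ l :=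
      (hasDerivAt_s l).pow (n + 2)
    convert this using 1
    push_cast
    ring
  have hdd : HasDerivAt (fun x : ℝ => (-c * ((n : ℝ) + 1) * (Real.exp x + Real.exp (-x))) /
      (Real.exp x - Real.exp (-x)) ^ (n + 2)) _ l := hu.div hv (pow_ne_zero _ hs)
  have key : (fun x : ℝ => -c * (n + 1) * (Real.exp x + Real.exp (-x)) /
        (Real.exp x - Real.exp (-x)) ^ (n + 2))
      = fun x : ℝ => (-c * ((n : ℝ) + 1) * (Real.exp x + Real.exp (-x))) /
        (Real.exp x - Real.exp (-x)) ^ (n + 2) := by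
    funext x; push_cast; ring_nf
  rw [key, hdd.deriv]
  set s := Real.exp l - Real.exp (-l) with hsdef
  set t := Real.exp l + Real.exp (-l) with htdef
  have ht : t ^ 2 = s ^ 2 + 4 := by
    have h1 : Real.exp l * Real.exp (-l) = 1 := by rw [← Real.exp_add]; simp
    simp only [hsdef, htdef]
    nlinarith [h1]
  rw [show (-c * ((n : ℝ) + 1) * s * s ^ (n + 2) -
        -c * ((n : ℝ) + 1) * t * (((n : ℝ) + 2) * s ^ (n + 1) * t))
      = c * ((n : ℝ) + 1) * s ^ (n + 1) * (((n : ℝ) + 2) * t ^ 2 - s ^ 2) from by ring, ht]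
  field_simp
  ring

theorem iterated_second_order_operators_on_csch
    (F : ℕ → ℝ → ℝ)
    (h0 : ∀ l : ℝ, F 0 l = 2 / (Real.exp l - Real.exp (-l)))
    (hsucc : ∀ k : ℕ, ∀ l : ℝ,
      F (k + 1) l = deriv (deriv (F k)) l - (2 * (k : ℝ) + 1) ^ 2 * F k l) :
    ∀ d : ℕ, ∀ l : ℝ, l ≠ 0 →
      F d l = 2 ^ (2 * d + 1) * (Nat.factorial (2 * d) : ℝ) /
        (Real.exp l - Real.exp (-l)) ^ (2 * d + 1) := by
  intro d
  induction d with
  | zero => intro l _; simpa using h0 l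
  | succ d ih =>
    intro l hl
    have hop : {x : ℝ | x ≠ 0} ∈ nhds l := isOpen_ne.mem_nhds hl
    set c : ℝ := 2 ^ (2 * d + 1) * (Nat.factorial (2 * d) : ℝ) with hc
    have hFG : F d =ᶠ[nhds l] fun x => c / (Real.exp x - Real.exp (-x)) ^ (2 * d + 1) := by
      filter_upwards [hop] with x hx
      exact ih x hx
    have hdd : deriv (deriv (F d)) l
        = deriv (deriv (fun x => c / (Real.exp x - Real.exp (-x)) ^ (2 * d + 1))) l :=
      Filter.EventuallyEq.deriv_eq (Filter.EventuallyEq.deriv hFG)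
    have h2 := d2 c (2 * d) hl
    rw [hsucc d l, hdd, h2, ih l hl]
    have hs := s_ne hl
    have hfact : (Nat.factorial (2 * (d + 1)) : ℝ)
        = (2 * (d : ℝ) + 2) * (2 * (d : ℝ) + 1) * (Nat.factorial (2 * d) : ℝ) := by
      rw [show 2 * (d + 1) = (2 * d + 1) + 1 by ring, Nat.factorial_succ, Nat.factorial_succ]
      push_cast; ring
    rw [show 2 * (d + 1) + 1 = 2 * d + 3 by ring, hfact, hc]
    field_simp
    push_cast
    ring
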